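/- The extreme point v(m,U,V) of QSTAB(G) for the 2×N unicasts-and-broadcast conflict graph can be written as a nonnegative linear combination of incidence vectors of stable sets of G with total coefficient 1 + 1/|U| - 1/|U|^2 ≤ 5/4; hence the fractional weighted chromatic number of G with weights v(m,U,V) is at most 1 + 1/|U| - 1/|U|^2 ≤ 1.25 (using |U| ≥ 2). -/

import Mathlib

/-- Vertices of the enhanced conflict graph of the `2 × N` unicasts-and-broadcast
pattern: `u1 j`, `b1 j` are the unicast and broadcast subflows from input 1 and
`u2 j` the unicasts from input 2. -/
inductive V3 (N : ℕ) where
  | u1 : Fin N → V3 N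
  | b1 : Fin N → V3 N
  | u2 : Fin N → V3 N
deriving DecidableEq

/-- The enhanced conflict graph: `u1 j ~ u1 k`, `b1 j ~ u1 k` (input-1
conflicts), `u2 j ~ u2 k` (input-2 conflicts), the `b1 j` pairwise nonadjacent,
and `u1 j ~ u2 j`, `b1 j ~ u2 j` (output conflicts). -/
def G3 (N : ℕ) : SimpleGraph (V3 N) where
  Adj a b := a ≠ b ∧
    (match a, b with
      | .u1 _, .u1 _ => True
      | .u1 _, .b1 _ => True
      | .b1 _, .u1 _ => True
      | .b1 _, .b1 _ => False
      | .u2 _, .u2 _ => True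
      | .u1 j, .u2 k => j = k
      | .u2 j, .u1 k => j = k
      | .b1 j, .u2 k => j = k
      | .u2 j, .b1 k => j = k)
  symm := by
    constructor
    rintro (j | j | j) (k | k | k) ⟨hne, h⟩ <;> exact ⟨hne.symm, by simp_all⟩
  loopless := by constructor; rintro (j | j | j) ⟨hne, _⟩ <;> exact hne rfl

/-- The weight vector `v(m, U, V)` on the vertices of `G3 N`. -/
noncomputable def wV3 (N : ℕ) (m : Fin N) (U Vt : Finset (Fin N)) : V3 N → ℝ
  | .u1 j => if j = m then ((U.card : ℝ))⁻¹ else 0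
  | .b1 j => if j ∈ Vt then 1 - ((U.card : ℝ))⁻¹ else 0
  | .u2 j => if j ∈ U then ((U.card : ℝ))⁻¹ else 0

/-- Stable sets used in the decomposition, indexed by a sum type. -/
def S19 (N : ℕ) (m : Fin N) (U Vt : Finset (Fin N)) :
    Fin N ⊕ (Fin N ⊕ Fin 1) → Finset (V3 N)
  | .inl j => if j ∈ U then {V3.u1 m, V3.u2 j} else ∅
  | .inr (.inl j) => insert (V3.u2 j) ((Vt.erase j).image V3.b1)
  | .inr (.inr _) => U.image V3.b1

/-- Coefficients of the decomposition. -/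
noncomputable def lam19 (N : ℕ) (U : Finset (Fin N)) :
    Fin N ⊕ (Fin N ⊕ Fin 1) → ℝ
  | .inl j => if j ∈ U then ((U.card : ℝ))⁻¹ ^ 2 else 0
  | .inr (.inl j) => if j ∈ U then ((U.card : ℝ))⁻¹ - ((U.card : ℝ))⁻¹ ^ 2 else 0
  | .inr (.inr _) => ((U.card : ℝ))⁻¹ - ((U.card : ℝ))⁻¹ ^ 2

/-- The extreme point `v(m, U, V)` of `QSTAB(G)` can be written as a nonnegative
combination of incidence vectors of stable sets of `G` with total coefficient
`1 + 1/|U| - 1/|U|² ≤ 5/4`; hence the fractional weighted chromatic number of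
`G` with these weights is at most `1 + 1/|U| - 1/|U|² ≤ 1.25`. -/
theorem stmt19 (N : ℕ) (U Vt : Finset (Fin N)) (m : Fin N)
    (h2 : 2 ≤ U.card) (hle : U.card ≤ N - 1) (hm : m ∉ U) (hUV : U ⊆ Vt) :
    (∃ (k : ℕ) (S : Fin k → Finset (V3 N)) (lam : Fin k → ℝ),
      (∀ i, 0 ≤ lam i) ∧
      (∀ i, ∀ a ∈ S i, ∀ b ∈ S i, ¬ (G3 N).Adj a b) ∧
      (∑ i, lam i = 1 + ((U.card : ℝ))⁻¹ - (((U.card : ℝ))⁻¹) ^ 2) ∧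
      (∀ v : V3 N,
        ∑ i, lam i * (if v ∈ S i then (1 : ℝ) else 0) = wV3 N m U Vt v)) ∧
    1 + ((U.card : ℝ))⁻¹ - (((U.card : ℝ))⁻¹) ^ 2 ≤ 5 / 4 := by
  classical
  have hsR : (U.card : ℝ) ≠ 0 := Nat.cast_ne_zero.mpr (by omega)
  set c : ℝ := ((U.card : ℝ))⁻¹ with hc
  have hc0 : 0 ≤ c := by positivity
  have hc1 : c ≤ 1 := by
    rw [hc]
    have : (1 : ℝ) ≤ (U.card : ℝ) := by exact_mod_cast by omega
    exact inv_le_one_of_one_le₀ this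
  have hcc : 0 ≤ c - c ^ 2 := by nlinarith
  have hsc : (U.card : ℝ) * c = 1 := by
    rw [hc]; field_simp
  have hc' : ((U.card : ℝ))⁻¹ = c := hc.symm
  have hc2 : (((U.card : ℝ)) ^ 2)⁻¹ = c ^ 2 := by rw [hc, inv_pow]
  constructor
  · let e : (Fin N ⊕ (Fin N ⊕ Fin 1)) ≃ Fin (N + (N + 1)) :=
      (Equiv.sumCongr (Equiv.refl _) finSumFinEquiv).trans finSumFinEquiv
    refine ⟨N + (N + 1), fun i => S19 N m U Vt (e.symm i),
      fun i => lam19 N U (e.symm i), ?_, ?_, ?_, ?_⟩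
    · have hnn : ∀ x, 0 ≤ lam19 N U x := by
        rintro (j | j | j) <;> simp only [lam19] <;>
          first
            | exact hcc
            | (split_ifs <;> first | positivity | exact hcc | exact le_rfl)
      exact fun i => hnn _
    · have hst : ∀ x, ∀ a ∈ S19 N m U Vt x, ∀ b ∈ S19 N m U Vt x,
          ¬ (G3 N).Adj a b := by
        rintro (j | j | j) <;> intro a ha b hb <;>
          simp only [S19] at ha hb
        · split_ifs at ha hb with hjU
          · simp only [Finset.mem_insert, Finset.mem_singleton] at ha hb
            rcases ha with rfl | rfl <;> rcases hb with rfl | rfl <;>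
              rintro ⟨hne, hadj⟩ <;> simp_all <;>
              exact hm (hadj ▸ hjU)
          · simp at ha
        · simp only [Finset.mem_insert, Finset.mem_image, Finset.mem_erase] at ha hb
          rcases ha with rfl | ⟨x, ⟨hx1, hx2⟩, rfl⟩ <;>
            rcases hb with rfl | ⟨y, ⟨hy1, hy2⟩, rfl⟩ <;>
            rintro ⟨hne, hadj⟩ <;> simp_all
        · simp only [Finset.mem_image] at ha hb
          obtain ⟨x, hx, rfl⟩ := ha
          obtain ⟨y, hy, rfl⟩ := hb
          rintro ⟨hne, hadj⟩
          exact hadj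
      exact fun i => hst _
    · rw [Equiv.sum_comp e.symm (lam19 N U), Fintype.sum_sum_type,
        Fintype.sum_sum_type]
      simp only [lam19, hc', hc2, Finset.sum_ite_mem, Finset.univ_inter,
        Finset.sum_const, nsmul_eq_mul, Finset.card_univ, Fintype.card_fin,
        one_smul]
      linear_combination hsc
    · intro v
      rw [Equiv.sum_comp e.symm
        (fun x => lam19 N U x * (if v ∈ S19 N m U Vt x then (1:ℝ) else 0)),
        Fintype.sum_sum_type, Fintype.sum_sum_type]
      rcases v with j | j | j
      · -- v = u1 j
        have hA : ∀ k : Fin N,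
            lam19 N U (.inl k) * (if V3.u1 j ∈ S19 N m U Vt (.inl k) then (1:ℝ) else 0)
              = if k ∈ U ∧ j = m then c ^ 2 else 0 := by
          intro k
          simp only [lam19, S19]
          by_cases hk : k ∈ U <;> by_cases hj : j = m <;>
            simp [hk, hj, hc', hc2]
        have hB : ∀ k : Fin N,
            lam19 N U (.inr (.inl k)) *
              (if V3.u1 j ∈ S19 N m U Vt (.inr (.inl k)) then (1:ℝ) else 0) = 0 := by
          intro k
          simp [lam19, S19]
        have hC : ∀ k : Fin 1,
            lam19 N U (.inr (.inr k)) *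
              (if V3.u1 j ∈ S19 N m U Vt (.inr (.inr k)) then (1:ℝ) else 0) = 0 := by
          intro k
          simp [lam19, S19]
        simp only [hA, hB, hC, Finset.sum_const_zero, add_zero]
        by_cases hj : j = m
        · have h1 : ∑ k : Fin N, (if k ∈ U ∧ j = m then c ^ 2 else 0)
              = (U.card : ℝ) * c ^ 2 := by
            simp [hj, Finset.sum_ite_mem, mul_comm]
          rw [h1]
          simp only [wV3]
          rw [if_pos hj, hc']
          linear_combination c * hsc
        · simp [hj, wV3]
      · -- v = b1 j
        have hA : ∀ k : Fin N,
            lam19 N U (.inl k) * (if V3.b1 j ∈ S19 N m U Vt (.inl k) then (1:ℝ) else 0)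
              = 0 := by
          intro k
          simp only [lam19, S19]
          by_cases hk : k ∈ U <;> simp [hk, hc', hc2]
        have hB : ∀ k : Fin N,
            lam19 N U (.inr (.inl k)) *
              (if V3.b1 j ∈ S19 N m U Vt (.inr (.inl k)) then (1:ℝ) else 0)
              = if k ∈ U.erase j ∧ j ∈ Vt then c - c ^ 2 else 0 := by
          intro k
          simp only [lam19, S19, Finset.mem_insert, Finset.mem_image,
            Finset.mem_erase]
          by_cases hk : k ∈ U <;> by_cases hj : j ∈ Vt <;>
            by_cases hjk : j = k <;>
            simp [hk, hj, hjk, Finset.mem_erase, Ne, eq_comm, hc', hc2]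
        have hC : ∀ k : Fin 1,
            lam19 N U (.inr (.inr k)) *
              (if V3.b1 j ∈ S19 N m U Vt (.inr (.inr k)) then (1:ℝ) else 0)
              = if j ∈ U then c - c ^ 2 else 0 := by
          intro k
          simp only [lam19, S19, Finset.mem_image]
          by_cases hj : j ∈ U <;> simp [hj, hc', hc2]
        simp only [hA, hB, hC, Finset.sum_const_zero, zero_add,
          Finset.sum_const, Finset.card_univ, Fintype.card_fin, one_smul]
        by_cases hj : j ∈ Vt
        · simp only [hj, and_true, Finset.sum_ite_mem, Finset.univ_inter,
            Finset.sum_const, nsmul_eq_mul]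
          simp only [wV3, if_pos hj, hc']
          by_cases hjU : j ∈ U
          · rw [Finset.card_erase_of_mem hjU]
            simp only [hjU, if_true, one_smul]
            have hcast : ((U.card - 1 : ℕ) : ℝ) = (U.card : ℝ) - 1 := by
              have : 1 ≤ U.card := by omega
              push_cast [this]; ring
            rw [hcast]
            linear_combination (1 - c) * hsc
          · rw [Finset.erase_eq_of_notMem hjU]
            simp only [hjU, if_false, add_zero]
            linear_combination (1 - c) * hsc
        · have hjU : j ∉ U := fun h => hj (hUV h)
          simp only [hj, and_false, if_false, Finset.sum_const_zero, hjU,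
            smul_zero, zero_add, wV3, if_neg hj]
          try simp
      · -- v = u2 j
        have hA : ∀ k : Fin N,
            lam19 N U (.inl k) * (if V3.u2 j ∈ S19 N m U Vt (.inl k) then (1:ℝ) else 0)
              = if k ∈ U ∧ k = j then c ^ 2 else 0 := by
          intro k
          simp only [lam19, S19]
          rcases eq_or_ne k j with rfl | hkj
          · by_cases hk : k ∈ U <;> simp [hk, hc', hc2]
          · have hjk : j ≠ k := hkj.symm
            by_cases hk : k ∈ U <;> simp [hk, hkj, hjk, hc', hc2]
        have hB : ∀ k : Fin N,
            lam19 N U (.inr (.inl k)) *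
              (if V3.u2 j ∈ S19 N m U Vt (.inr (.inl k)) then (1:ℝ) else 0)
              = if k ∈ U ∧ k = j then c - c ^ 2 else 0 := by
          intro k
          simp only [lam19, S19, Finset.mem_insert, Finset.mem_image]
          rcases eq_or_ne k j with rfl | hkj
          · by_cases hk : k ∈ U <;> simp [hk, hc', hc2]
          · have hjk : j ≠ k := hkj.symm
            by_cases hk : k ∈ U <;> simp [hk, hkj, hjk, hc', hc2]
        have hC : ∀ k : Fin 1,
            lam19 N U (.inr (.inr k)) *
              (if V3.u2 j ∈ S19 N m U Vt (.inr (.inr k)) then (1:ℝ) else 0) = 0 := by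
          intro k
          simp [lam19, S19]
        simp only [hA, hB, hC, Finset.sum_const_zero, add_zero]
        by_cases hjU : j ∈ U
        · have hiff : ∀ k : Fin N, (k ∈ U ∧ k = j) = (k = j) := fun k => by
            simp only [eq_iff_iff]
            exact ⟨fun h => h.2, fun h => ⟨h ▸ hjU, h⟩⟩
          simp only [hiff, Finset.sum_ite_eq', Finset.mem_univ, if_true,
            wV3, if_pos hjU, hc']
          ring
        · have : ∀ k : Fin N, ¬ (k ∈ U ∧ k = j) := by
            rintro k ⟨hk, rfl⟩; exact hjU hk
          simp [this, wV3, hjU]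
  · nlinarith [sq_nonneg (c - 1/2)]
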